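/- Let F be a field and let A be an invertible (n+1)×(n+1) matrix over F with rows r_0,…,r_n. Define the two-row graph G(A) to be the simple graph on vertex set {0,…,n} where i and j are adjacent if and only if there exists an index k with 0 ≤ k ≤ n−1 such that the 2×2 matrix with rows (a_{i,k}, a_{i,k+1}) and (a_{j,k}, a_{j,k+1}) is invertible. Then G(A) is connected. -/

import Mathlib

/-- The two-row graph of a matrix `A`: rows `i` and `j` are adjacent iff some `2 × 2`
submatrix of `A` formed from rows `i, j` and consecutive columns `k, k+1` is invertible. -/
def twoRowGraph {F : Type*} [Field F] {n : ℕ}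
    (A : Matrix (Fin (n + 1)) (Fin (n + 1)) F) : SimpleGraph (Fin (n + 1)) :=
  SimpleGraph.fromRel (fun i j => ∃ k : Fin n,
    A i k.castSucc * A j k.succ - A i k.succ * A j k.castSucc ≠ 0)

/-- If `A` is an invertible `(n+1) × (n+1)` matrix over a field, `n ≥ 1`, then its
two-row graph is connected. -/
theorem twoRowGraph_connected {F : Type*} [Field F] {n : ℕ} (hn : 1 ≤ n)
    (A : Matrix (Fin (n + 1)) (Fin (n + 1)) F) (hA : IsUnit A.det) :
    (twoRowGraph A).Connected := by
  classical
  rw [SimpleGraph.connected_iff]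
  refine ⟨?_, ⟨0⟩⟩
  intro i j
  by_contra hij
  set G := twoRowGraph A with hG
  set S : Set (Fin (n + 1)) := {v | G.Reachable i v} with hSdef
  have hiS : i ∈ S := SimpleGraph.Reachable.refl i
  have hjS : j ∉ S := hij
  have hdet : A.det ≠ 0 := hA.ne_zero
  -- non-adjacency across the cut: all consecutive 2×2 minors vanish
  have hcross : ∀ s ∈ S, ∀ t ∉ S, ∀ k : Fin n,
      A s k.castSucc * A t k.succ - A s k.succ * A t k.castSucc = 0 := by
    intro s hs t ht k
    by_contra h
    have hadj : G.Adj s t := by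
      rw [hG, twoRowGraph, SimpleGraph.fromRel_adj]
      exact ⟨fun hst => ht (hst ▸ hs), Or.inl ⟨k, h⟩⟩
    exact ht (hs.trans hadj.reachable)
  -- if S has a nonzero projection at window k, the other side vanishes there
  have hwin : ∀ k : Fin n, ∀ s ∈ S, ∀ t ∉ S,
      (A s k.castSucc ≠ 0 ∨ A s k.succ ≠ 0) →
      A t k.castSucc = 0 ∧ A t k.succ = 0 := by
    intro k s hs t ht hsnz
    by_contra h
    have hnz' : A t k.castSucc ≠ 0 ∨ A t k.succ ≠ 0 := by tauto
    have key : ∀ r, A r k.castSucc * A t k.succ - A r k.succ * A t k.castSucc = 0 := by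
      intro r
      by_cases hr : r ∈ S
      · exact hcross r hr t ht k
      · have h1 := hcross s hs r hr k
        have h2 := hcross s hs t ht k
        rcases hsnz with ha | hb
        · apply mul_left_cancel₀ ha
          linear_combination (A r k.castSucc) * h2 - (A t k.castSucc) * h1
        · apply mul_left_cancel₀ hb
          linear_combination (A r k.succ) * h2 - (A t k.succ) * h1
    apply hdet
    rw [← Matrix.exists_mulVec_eq_zero_iff]
    have hC : k.castSucc ≠ k.succ := (Fin.castSucc_lt_succ : k.castSucc < k.succ).ne
    refine ⟨Pi.single k.castSucc (A t k.succ) + Pi.single k.succ (-(A t k.castSucc)), ?_, ?_⟩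
    · intro h0
      rcases hnz' with hnz1 | hnz2
      · have := congrFun h0 k.succ
        simp [Pi.single_eq_of_ne hC.symm] at this
        exact hnz1 this
      · have := congrFun h0 k.castSucc
        simp [Pi.single_eq_of_ne hC] at this
        exact hnz2 this
    · rw [Matrix.mulVec_add, Matrix.mulVec_single, Matrix.mulVec_single]
      funext r
      simp only [Pi.add_apply, Pi.zero_apply, Pi.smul_apply, Matrix.col_apply, op_smul_eq_mul]
      linear_combination key r
  -- each window is entirely zero on one side of the cut
  have hWside : ∀ k : Fin n,
      (∀ s ∈ S, A s k.castSucc = 0 ∧ A s k.succ = 0) ∨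
      (∀ t ∉ S, A t k.castSucc = 0 ∧ A t k.succ = 0) := by
    intro k
    by_cases hex : ∃ s ∈ S, A s k.castSucc ≠ 0 ∨ A s k.succ ≠ 0
    · obtain ⟨s, hs, hsnz⟩ := hex
      exact Or.inr fun t ht => hwin k s hs t ht hsnz
    · push_neg at hex
      exact Or.inl fun s hs => hex s hs
  -- a column can't be zero on both sides
  have hcolnz : ∀ c : Fin (n + 1),
      (∀ s ∈ S, A s c = 0) → (∀ t ∉ S, A t c = 0) → False := by
    intro c h1 h2
    apply hdet
    apply Matrix.det_eq_zero_of_column_eq_zero c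
    intro r
    by_cases hr : r ∈ S
    · exact h1 r hr
    · exact h2 r hr
  set SZ : Fin (n + 1) → Prop := fun c => ∀ s ∈ S, A s c = 0 with hSZ
  have hstep : ∀ k : Fin n, (SZ k.castSucc ↔ SZ k.succ) := by
    intro k
    rcases hWside k with h | h
    · exact ⟨fun _ s hs => (h s hs).2, fun _ s hs => (h s hs).1⟩
    · exact ⟨fun hsz => (hcolnz _ hsz fun t ht => (h t ht).1).elim,
        fun hsz => (hcolnz _ hsz fun t ht => (h t ht).2).elim⟩
  have hall : ∀ c : Fin (n + 1), SZ c ↔ SZ 0 := by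
    intro c
    induction c using Fin.induction with
    | zero => exact Iff.rfl
    | succ k ih => exact (hstep k).symm.trans ih
  by_cases h0 : SZ (0 : Fin (n + 1))
  · apply hdet
    apply Matrix.det_eq_zero_of_row_eq_zero i
    intro c
    exact ((hall c).mpr h0) i hiS
  · have hTZ : ∀ c : Fin (n + 1), ∀ t ∉ S, A t c = 0 := by
      intro c
      rcases lt_or_ge (c : ℕ) n with hc | hc
      · rcases hWside ⟨c, hc⟩ with h | h
        · exact absurd ((hall (Fin.castSucc ⟨c, hc⟩)).mp fun s hs => (h s hs).1) h0
        · intro t ht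
          have hcast : Fin.castSucc ⟨(c : ℕ), hc⟩ = c := by
            apply Fin.ext; simp
          rw [← hcast]
          exact (h t ht).1
      · have hcv : (c : ℕ) = n := le_antisymm (Nat.lt_succ_iff.mp c.isLt) hc
        rcases hWside ⟨n - 1, by omega⟩ with h | h
        · exact absurd ((hall _).mp fun s hs => (h s hs).1) h0
        · intro t ht
          have hsucc : Fin.succ ⟨n - 1, by omega⟩ = c := by
            apply Fin.ext; simp [Fin.val_succ]; omega
          rw [← hsucc]
          exact (h t ht).2
    apply hdet
    apply Matrix.det_eq_zero_of_row_eq_zero j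
    intro c
    exact hTZ c j hjS
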